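/- Let α > 1 be an algebraic number that is not an algebraic integer, so that the atoms of N₀[α] are exactly the powers αⁿ. Then for every nonzero β ∈ N₀[α] and all sufficiently large n (namely n > deg f for some f ∈ ℕ₀[X] with f(α) = β, and α^{n+1} > αⁿ + β), the atom αⁿ appears in every factorization of β + αⁿ; consequently L(β + αⁿ) = 1 + L(β) elementwise. -/

import Mathlib

open Polynomial

/-- `N₀[α]`: the additive submonoid of ℝ generated by the powers of `α`. -/
def Nmon (α : ℝ) : AddSubmonoid ℝ := AddSubmonoid.closure (Set.range fun n : ℕ => α ^ n)

/-- Evaluation of a polynomial with ℕ-coefficients at a real number. -/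
noncomputable def pev (α : ℝ) (f : Polynomial ℕ) : ℝ :=
  Polynomial.eval₂ (Nat.castRingHom ℝ) α f

/-- Lengths of factorizations of `x` in `N₀[α]`, given as polynomials in `ℕ₀[X]`
evaluating to `x`. -/
def LSetP (α : ℝ) (x : ℝ) : Set ℕ :=
  {n | ∃ f : Polynomial ℕ, pev α f = x ∧ f.eval 1 = n}

lemma pev_eq_sum (α : ℝ) (g : Polynomial ℕ) :
    pev α g = ∑ i ∈ g.support, (g.coeff i : ℝ) * α ^ i := by
  simp [pev, eval₂_eq_sum, Polynomial.sum]

lemma term_le_pev (α : ℝ) (hα : 0 ≤ α) (g : Polynomial ℕ) (m : ℕ) :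
    (g.coeff m : ℝ) * α ^ m ≤ pev α g := by
  rw [pev_eq_sum]
  by_cases hm : m ∈ g.support
  · exact Finset.single_le_sum
      (fun i _ => mul_nonneg (Nat.cast_nonneg _ : (0:ℝ) ≤ _) (pow_nonneg hα i)) hm
  · rw [Polynomial.notMem_support_iff.mp hm]
    simpa using Finset.sum_nonneg
      fun i _ => mul_nonneg (Nat.cast_nonneg _ : (0:ℝ) ≤ _) (pow_nonneg hα i)

lemma pev_add (α : ℝ) (g h : Polynomial ℕ) : pev α (g + h) = pev α g + pev α h := by
  simp [pev, eval₂_add]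

lemma pev_X_pow (α : ℝ) (n : ℕ) : pev α (X ^ n) = α ^ n := by
  simp [pev]

lemma aeval_map_nat (α : ℝ) (p : Polynomial ℕ) :
    Polynomial.aeval α (p.map (Nat.castRingHom ℤ)) = pev α p := by
  rw [aeval_def, eval₂_map, pev]
  have : (algebraMap ℤ ℝ).comp (Nat.castRingHom ℤ) = Nat.castRingHom ℝ :=
    Subsingleton.elim _ _
  rw [this]

/-- For algebraic `α > 1` not an algebraic integer, any nonzero `β ∈ N₀[α]` and any `n`
larger than the degree of some representation of `β` with `α^(n+1) > α^n + β`: the atom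
`α^n` appears in every factorization of `β + α^n`, and `L(β + α^n) = 1 + L(β)`. -/
theorem stmt12 (α : ℝ) (h1 : 1 < α) (halg : IsAlgebraic ℚ α) (hint : ¬ IsIntegral ℤ α)
    (β : ℝ) (hβ : β ∈ Nmon α) (hβ0 : β ≠ 0)
    (f : Polynomial ℕ) (hf : pev α f = β) (n : ℕ) (hn : f.natDegree < n)
    (hbig : α ^ n + β < α ^ (n + 1)) :
    (∀ g : Polynomial ℕ, pev α g = β + α ^ n → g.coeff n ≠ 0) ∧
    LSetP α (β + α ^ n) = (fun m => m + 1) '' LSetP α β := by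
  have hα0 : (0:ℝ) < α := lt_trans one_pos h1
  have part1 : ∀ g : Polynomial ℕ, pev α g = β + α ^ n → g.coeff n ≠ 0 := by
    intro g hg hgn
    have hcoeff : ∀ m, n ≤ m → g.coeff m = 0 := by
      intro m hm
      rcases eq_or_lt_of_le hm with rfl | hlt
      · exact hgn
      · by_contra hne
        have h1le : (1:ℝ) ≤ (g.coeff m : ℝ) := by
          exact_mod_cast Nat.one_le_iff_ne_zero.mpr hne
        have hle : α ^ (n+1) ≤ pev α g := by
          calc α^(n+1) ≤ α^m := pow_le_pow_right₀ h1.le hlt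
          _ ≤ (g.coeff m : ℝ) * α^m := le_mul_of_one_le_left (pow_nonneg hα0.le m) h1le
          _ ≤ pev α g := term_le_pev α hα0.le g m
        rw [hg] at hle
        linarith
    set h : Polynomial ℤ := X^n + f.map (Nat.castRingHom ℤ) - g.map (Nat.castRingHom ℤ)
      with hh
    have hfc : ∀ m, n ≤ m → f.coeff m = 0 := fun m hm =>
      coeff_eq_zero_of_natDegree_lt (lt_of_lt_of_le hn hm)
    have hcn : h.coeff n = 1 := by
      simp [hh, coeff_X_pow, coeff_map, hfc n le_rfl, hgn]
    have hdegle : h.natDegree ≤ n := by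
      apply natDegree_le_iff_coeff_eq_zero.mpr
      intro m hm
      simp [hh, coeff_X_pow, coeff_map, hfc m hm.le, hcoeff m hm.le, Nat.ne_of_gt hm]
    have hmonic : h.Monic := Polynomial.monic_of_natDegree_le_of_coeff_eq_one n hdegle hcn
    have hroot : Polynomial.aeval α h = 0 := by
      simp only [hh, map_sub, map_add, map_pow, aeval_X, aeval_map_nat, hf, hg]
      ring
    exact hint ⟨h, hmonic, hroot⟩
  refine ⟨part1, ?_⟩
  ext k
  simp only [Set.mem_image, LSetP, Set.mem_setOf_eq]
  constructor
  · rintro ⟨g, hg, rfl⟩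
    have hgn := part1 g hg
    set g' := g.erase n + monomial n (g.coeff n - 1) with hg'def
    have hdec : g' + X ^ n = g := by
      rw [hg'def, X_pow_eq_monomial, add_assoc, ← map_add (monomial n)]
      rw [Nat.sub_add_cancel (Nat.one_le_iff_ne_zero.mpr hgn)]
      rw [add_comm]
      exact Polynomial.monomial_add_erase g n
    have hpev : pev α g' = β := by
      have := pev_add α g' (X ^ n)
      rw [hdec, hg, pev_X_pow] at this
      linarith
    refine ⟨g'.eval 1, ⟨g', hpev, rfl⟩, ?_⟩
    conv_rhs => rw [← hdec]
    simp [eval_add, eval_monomial, eval_pow]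
  · rintro ⟨m, ⟨f', hf', rfl⟩, rfl⟩
    refine ⟨f' + X ^ n, ?_, ?_⟩
    · rw [pev_add, pev_X_pow, hf']
    · simp [eval_add]
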